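/- With the structures as in the standard setup and θₐ := φₐφ - ξₐ⊗η, one has θₐφ - (φξₐ)⊗η = -φₐ = φθₐ - ξ⊗(ηₐ∘φ), i.e. for all X: θₐφX - η(X)φξₐ = -φₐX and φθₐX - ηₐ(φX)ξ = -φₐX. -/

import Mathlib

open RealInnerProductSpace

/-- Pointwise setup on a real inner product space: an almost contact metric
structure `(φ, ξ, η)` together with an almost contact metric 3-structure
`(φₐ, ξₐ, ηₐ)`, `a ∈ ZMod 3`, satisfying the quaternionic contact relations and
the compatibility relations coming from `JJₐ = JₐJ`.  Here `η x = ⟪x, ξ⟫` and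
`ηₐ x = ⟪x, ξₐ⟫`. -/
structure ContactSetup (V : Type*) [NormedAddCommGroup V] [InnerProductSpace ℝ V] where
  φ : V →ₗ[ℝ] V
  ξ : V
  φa : ZMod 3 → (V →ₗ[ℝ] V)
  ξa : ZMod 3 → V
  φ_sq : ∀ x, φ (φ x) = -x + ⟪x, ξ⟫ • ξ
  ξ_unit : ⟪ξ, ξ⟫ = 1
  φ_ξ : φ ξ = 0
  φ_metric : ∀ x y, ⟪φ x, φ y⟫ = ⟪x, y⟫ - ⟪x, ξ⟫ * ⟪y, ξ⟫
  φa_sq : ∀ a x, φa a (φa a x) = -x + ⟪x, ξa a⟫ • ξa a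
  ξa_unit : ∀ a, ⟪ξa a, ξa a⟫ = 1
  φa_ξa : ∀ a, φa a (ξa a) = 0
  φa_metric : ∀ a x y, ⟪φa a x, φa a y⟫ = ⟪x, y⟫ - ⟪x, ξa a⟫ * ⟪y, ξa a⟫
  quat₁ : ∀ a x, φa a (φa (a + 1) x) - ⟪x, ξa (a + 1)⟫ • ξa a = φa (a + 2) x
  quat₂ : ∀ a x, φa (a + 2) x = -(φa (a + 1) (φa a x)) + ⟪x, ξa a⟫ • ξa (a + 1)
  quat_ξ₁ : ∀ a, φa a (ξa (a + 1)) = ξa (a + 2)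
  quat_ξ₂ : ∀ a, ξa (a + 2) = -(φa (a + 1) (ξa a))
  inter : ∀ a x, φa a (φ x) - ⟪x, ξ⟫ • ξa a = φ (φa a x) - ⟪x, ξa a⟫ • ξ
  inter_ξ : ∀ a, φ (ξa a) = φa a ξ

/-- The local symmetric tensor `θₐ := φₐφ - ξₐ ⊗ η`. -/
def ContactSetup.θa {V : Type*} [NormedAddCommGroup V] [InnerProductSpace ℝ V]
    (S : ContactSetup V) (a : ZMod 3) (x : V) : V :=
  S.φa a (S.φ x) - ⟪x, S.ξ⟫ • S.ξa a

/-- `θₐφ - (φξₐ)⊗η = -φₐ = φθₐ - ξ⊗(ηₐ∘φ)`. -/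
theorem theta_a_phi {V : Type*} [NormedAddCommGroup V] [InnerProductSpace ℝ V]
    (S : ContactSetup V) (a : ZMod 3) (x : V) :
    S.θa a (S.φ x) - ⟪x, S.ξ⟫ • S.φ (S.ξa a) = -(S.φa a x) ∧
    S.φ (S.θa a x) - ⟪S.φ x, S.ξa a⟫ • S.ξ = -(S.φa a x) := by
  have hηφ : ∀ y : V, ⟪S.φ y, S.ξ⟫ = 0 := by
    intro y
    have h1 : S.φ (S.φ (S.φ y)) = -(S.φ y) + ⟪S.φ y, S.ξ⟫ • S.ξ := S.φ_sq (S.φ y)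
    have h2 : S.φ (S.φ (S.φ y)) = -(S.φ y) := by
      rw [S.φ_sq y, map_add, map_neg, map_smul, S.φ_ξ, smul_zero, add_zero]
    have h3 : ⟪S.φ y, S.ξ⟫ • S.ξ = 0 := by
      have := h1.symm.trans h2
      linear_combination (norm := module) this
    have := congrArg (fun v => ⟪v, S.ξ⟫) h3
    simpa only [real_inner_smul_left, S.ξ_unit, inner_zero_left, mul_one] using this
  constructor
  · show S.φa a (S.φ (S.φ x)) - ⟪S.φ x, S.ξ⟫ • S.ξa a - ⟪x, S.ξ⟫ • S.φ (S.ξa a) = _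
    rw [hηφ x, S.φ_sq x, map_add, map_neg, map_smul, S.inter_ξ a]
    module
  · show S.φ (S.φa a (S.φ x) - ⟪x, S.ξ⟫ • S.ξa a) - ⟪S.φ x, S.ξa a⟫ • S.ξ = _
    have hint := S.inter a (S.φ x)
    have hφφa : S.φ (S.φa a (S.φ x))
        = S.φa a (S.φ (S.φ x)) - ⟪S.φ x, S.ξ⟫ • S.ξa a + ⟪S.φ x, S.ξa a⟫ • S.ξ := by
      linear_combination (norm := module) -hint
    rw [map_sub, map_smul, hφφa, hηφ x, S.φ_sq x, map_add, map_neg, map_smul,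
      S.inter_ξ a]
    module
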